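/- Let G be a finite group, H ≤ G, R a commutative ring in which the index [G:H] is invertible, and M an R-module with R-linear G-action. Then the fork diagram ⊕_{g ∈ G} M_{H ∩ g⁻¹Hg} ⇉ M_H → M_G — where the two parallel maps are given on the summand indexed by g by the natural projection M_{H∩g⁻¹Hg} → M_H and by the map [m] ↦ [g•m] respectively, and the final map is the natural projection — is a split coequalizer diagram (in particular an absolute coequalizer). -/

import Mathlib

open scoped DirectSum

variable {G : Type*} [Group G] [Fintype G] [DecidableEq G] {R : Type*} [CommRing R]
  {M : Type*} [AddCommGroup M] [Module R M]
  [DistribMulAction G M] [SMulCommClass G R M]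

/-- The submodule of `M` generated by the elements `m - k • m` for `k ∈ K`,
so that `M ⧸ coinvAug R M K` is the module of `K`-coinvariants. -/
def coinvAug (R M : Type*) {G : Type*} [Group G] [CommRing R] [AddCommGroup M]
    [Module R M] [DistribMulAction G M] [SMulCommClass G R M] (K : Subgroup G) :
    Submodule R M :=
  Submodule.span R {x : M | ∃ (m : M) (k : G), k ∈ K ∧ x = m - k • m}

/-- The subgroup `H ∩ g⁻¹Hg` of `G`. -/
def conjInter {G : Type*} [Group G] (H : Subgroup G) (g : G) : Subgroup G :=
  H ⊓ Subgroup.comap (MulAut.conj g).toMonoidHom H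

section Aux

theorem coinvAug_mk_smul {K : Subgroup G} {k : G} (hk : k ∈ K) (m : M) :
    (Submodule.Quotient.mk (k • m) : M ⧸ coinvAug R M K) = Submodule.Quotient.mk m := by
  rw [Submodule.Quotient.eq]
  have h : m - k • m ∈ coinvAug R M K := Submodule.subset_span ⟨m, k, hk, rfl⟩
  simpa using (coinvAug R M K).neg_mem h

theorem coinvAug_mk_inv_smul {K : Subgroup G} {x y : G} (h : x⁻¹ * y ∈ K) (m : M) :
    (Submodule.Quotient.mk (y⁻¹ • m) : M ⧸ coinvAug R M K)
      = Submodule.Quotient.mk (x⁻¹ • m) := by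
  have hy : y⁻¹ • m = (x⁻¹ * y)⁻¹ • x⁻¹ • m := by
    rw [smul_smul]; congr 1; group
  rw [hy]
  exact coinvAug_mk_smul (K.inv_mem h) _

theorem mem_conjInter {H : Subgroup G} {g x : G} :
    x ∈ conjInter H g ↔ x ∈ H ∧ g * x * g⁻¹ ∈ H := by
  simp [conjInter, Subgroup.mem_inf, Subgroup.mem_comap, MulAut.conj_apply]

theorem conjInter_le {H : Subgroup G} {g : G} : conjInter H g ≤ H := fun _ hx =>
  (mem_conjInter.mp hx).1

theorem conjInter_one {H : Subgroup G} : conjInter H (1 : G) = H := by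
  ext x; simp [mem_conjInter]

theorem coinvAug_le {K K' : Subgroup G} (h : K ≤ K') :
    coinvAug R M K ≤ coinvAug R M K' := by
  apply Submodule.span_mono
  rintro x ⟨m, k, hk, rfl⟩
  exact ⟨m, k, h hk, rfl⟩

/-- The natural projection between coinvariant quotients. -/
def piQ {K K' : Subgroup G} (h : K ≤ K') :
    (M ⧸ coinvAug R M K) →ₗ[R] M ⧸ coinvAug R M K' :=
  Submodule.mapQ _ _ LinearMap.id (fun _ hx => coinvAug_le h hx)

@[simp] theorem piQ_mk {K K' : Subgroup G} (h : K ≤ K') (m : M) :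
    piQ (R := R) (M := M) h (Submodule.Quotient.mk m) = Submodule.Quotient.mk m := by
  simp [piQ, Submodule.mapQ_apply]

/-- The map `[m] ↦ [g • m]`. -/
def rhoQ (H : Subgroup G) (g : G) :
    (M ⧸ coinvAug R M (conjInter H g)) →ₗ[R] M ⧸ coinvAug R M H :=
  Submodule.mapQ _ _ (DistribSMul.toLinearMap R M g) (by
    rw [coinvAug, Submodule.span_le]
    rintro x ⟨m, k, hk, rfl⟩
    rw [SetLike.mem_coe, Submodule.mem_comap]
    have h2 : (DistribSMul.toLinearMap R M g) (m - k • m)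
        = (g • m) - (g * k * g⁻¹) • (g • m) := by
      have : (g * k * g⁻¹) • (g • m) = g • (k • m) := by
        rw [smul_smul, smul_smul]; congr 1; group
      simp [this, smul_sub]
    rw [h2]
    exact Submodule.subset_span ⟨g • m, g * k * g⁻¹, (mem_conjInter.mp hk).2, rfl⟩)

@[simp] theorem rhoQ_mk {H : Subgroup G} (g : G) (m : M) :
    rhoQ (R := R) (M := M) H g (Submodule.Quotient.mk m) = Submodule.Quotient.mk (g • m) := by
  simp [rhoQ, Submodule.mapQ_apply]

/-- The transfer sum `m ↦ ∑ [rep⁻¹ • m]`. -/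
noncomputable def transferAux (A B : Subgroup G) [Fintype (B ⧸ A.subgroupOf B)] :
    M →ₗ[R] M ⧸ coinvAug R M A :=
  ∑ c : B ⧸ A.subgroupOf B,
    (coinvAug R M A).mkQ ∘ₗ DistribSMul.toLinearMap R M (((Quotient.out c : B) : G))⁻¹

theorem transferAux_apply (A B : Subgroup G) [Fintype (B ⧸ A.subgroupOf B)] (m : M) :
    transferAux (R := R) (M := M) A B m
      = ∑ c : B ⧸ A.subgroupOf B,
          Submodule.Quotient.mk ((((Quotient.out c : B) : G))⁻¹ • m) := by
  simp [transferAux]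

theorem coinvAug_le_ker_transferAux (A B : Subgroup G) [Fintype (B ⧸ A.subgroupOf B)] :
    coinvAug R M B ≤ LinearMap.ker (transferAux (R := R) (M := M) A B) := by
  rw [coinvAug, Submodule.span_le]
  rintro x ⟨m, k, hk, rfl⟩
  rw [SetLike.mem_coe, LinearMap.mem_ker, map_sub, sub_eq_zero, transferAux_apply,
    transferAux_apply]
  have key : ∀ c : B ⧸ A.subgroupOf B,
      (Submodule.Quotient.mk ((((Quotient.out c : B) : G))⁻¹ • (k • m))
          : M ⧸ coinvAug R M A)
        = Submodule.Quotient.mk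
            ((((Quotient.out ((⟨k, hk⟩ : B)⁻¹ • c) : B) : G))⁻¹ • m) := by
    intro c
    have h1 : ((⟨k, hk⟩ : B)⁻¹ * Quotient.out c)⁻¹ * Quotient.out ((⟨k, hk⟩ : B)⁻¹ • c)
        ∈ A.subgroupOf B := by
      rw [← QuotientGroup.eq, QuotientGroup.out_eq', ← smul_eq_mul,
        ← MulAction.Quotient.smul_mk, QuotientGroup.out_eq']
    rw [Subgroup.mem_subgroupOf] at h1
    push_cast at h1
    have h2 := coinvAug_mk_inv_smul (R := R) (M := M)
      (K := A) (x := k⁻¹ * ((Quotient.out c : B) : G))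
      (y := ((Quotient.out ((⟨k, hk⟩ : B)⁻¹ • c) : B) : G)) h1 m
    rw [h2]
    congr 1
    rw [smul_smul]
    congr 1
    group
  calc ∑ c : B ⧸ A.subgroupOf B,
        (Submodule.Quotient.mk ((((Quotient.out c : B) : G))⁻¹ • m)
          : M ⧸ coinvAug R M A)
      = ∑ c : B ⧸ A.subgroupOf B,
          Submodule.Quotient.mk
            ((((Quotient.out ((⟨k, hk⟩ : B)⁻¹ • c) : B) : G))⁻¹ • m) := by
        exact (Equiv.sum_comp (MulAction.toPerm ((⟨k, hk⟩ : B)⁻¹)) _).symm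
    _ = ∑ c : B ⧸ A.subgroupOf B,
          Submodule.Quotient.mk ((((Quotient.out c : B) : G))⁻¹ • (k • m)) := by
        exact Finset.sum_congr rfl fun c _ => (key c).symm

/-- The transfer map on coinvariants. -/
noncomputable def transferQ (A B : Subgroup G) [Fintype (B ⧸ A.subgroupOf B)] :
    (M ⧸ coinvAug R M B) →ₗ[R] M ⧸ coinvAug R M A :=
  Submodule.liftQ _ (transferAux A B) (coinvAug_le_ker_transferAux A B)

theorem transferQ_mk (A B : Subgroup G) [Fintype (B ⧸ A.subgroupOf B)] (m : M) :
    transferQ (R := R) (M := M) A B (Submodule.Quotient.mk m)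
      = transferAux (R := R) (M := M) A B m := rfl

theorem card_top_quot (H : Subgroup G) [Fintype ((⊤ : Subgroup G) ⧸ H.subgroupOf ⊤)] :
    Fintype.card ((⊤ : Subgroup G) ⧸ H.subgroupOf ⊤) = H.index := by
  rw [← Subgroup.relIndex_top_right, Subgroup.relIndex, Subgroup.index,
    Nat.card_eq_fintype_card]

/-- The Mackey-type bijection rewriting a double-coset indexed double sum as a sum over
a system of representatives of the right cosets of `H`. -/
theorem doset_sum_eq (H : Subgroup G) {A : Type*} [AddCommMonoid A]
    [Fintype (DoubleCoset.Quotient (H : Set G) (H : Set G))]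
    [∀ d : DoubleCoset.Quotient (H : Set G) (H : Set G),
      Fintype (H ⧸ (conjInter H (Quotient.out d)).subgroupOf H)]
    [Fintype ((⊤ : Subgroup G) ⧸ H.subgroupOf ⊤)]
    (F : G → A) (hF : ∀ h ∈ H, ∀ x, F (h * x) = F x) :
    ∑ d : DoubleCoset.Quotient (H : Set G) (H : Set G),
      ∑ c : H ⧸ (conjInter H (Quotient.out d)).subgroupOf H,
        F (Quotient.out d * ((Quotient.out c : H) : G)⁻¹)
      = ∑ q : (⊤ : Subgroup G) ⧸ H.subgroupOf ⊤, F (((Quotient.out q : (⊤ : Subgroup G)) : G)⁻¹) := by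
  have key : (∑ p : Σ d : DoubleCoset.Quotient (H : Set G) (H : Set G),
        H ⧸ (conjInter H (Quotient.out d)).subgroupOf H,
        F (Quotient.out p.1 * ((Quotient.out p.2 : H) : G)⁻¹))
      = ∑ q : (⊤ : Subgroup G) ⧸ H.subgroupOf ⊤,
          F (((Quotient.out q : (⊤ : Subgroup G)) : G)⁻¹) := by
    refine Fintype.sum_bijective
        (fun p : Σ d : DoubleCoset.Quotient (H : Set G) (H : Set G),
            H ⧸ (conjInter H (Quotient.out d)).subgroupOf H =>
          (QuotientGroup.mk ⟨((Quotient.out p.2 : H) : G) * (Quotient.out p.1)⁻¹,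
            Subgroup.mem_top _⟩ : (⊤ : Subgroup G) ⧸ H.subgroupOf ⊤))
        ⟨?_, ?_⟩ _ _ ?_
    · -- injective
      rintro ⟨d, c⟩ ⟨d', c'⟩ h
      rw [QuotientGroup.eq, Subgroup.mem_subgroupOf] at h
      push_cast at h
      have ha := (Quotient.out c : H).2
      have ha' := (Quotient.out c' : H).2
      have hd : d = d' := by
        rw [← DoubleCoset.out_eq' H H d, ← DoubleCoset.out_eq' H H d', DoubleCoset.eq]
        refine ⟨((((Quotient.out c : H) : G) * (Quotient.out d)⁻¹)⁻¹
            * (((Quotient.out c' : H) : G) * (Quotient.out d')⁻¹))⁻¹, inv_mem h,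
          (((Quotient.out c : H) : G))⁻¹ * ((Quotient.out c' : H) : G),
          mul_mem (inv_mem ha) ha', ?_⟩
        group
      subst hd
      have hc : c = c' := by
        have hk : (Quotient.out c)⁻¹ * Quotient.out c'
            ∈ (conjInter H (Quotient.out d)).subgroupOf H := by
          rw [Subgroup.mem_subgroupOf]
          push_cast
          rw [mem_conjInter]
          refine ⟨mul_mem (inv_mem ha) ha', ?_⟩
          have : Quotient.out d * ((((Quotient.out c : H) : G))⁻¹
              * ((Quotient.out c' : H) : G)) * (Quotient.out d)⁻¹
              = (((Quotient.out c : H) : G) * (Quotient.out d)⁻¹)⁻¹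
                * (((Quotient.out c' : H) : G) * (Quotient.out d)⁻¹) := by group
          rw [this]
          exact h
        have := QuotientGroup.eq (s := (conjInter H (Quotient.out d)).subgroupOf H).mpr hk
        rwa [QuotientGroup.out_eq', QuotientGroup.out_eq'] at this
      rw [hc]
    · -- surjective
      intro q
      set y : G := ((Quotient.out q : (⊤ : Subgroup G)) : G) with hy
      set d : DoubleCoset.Quotient (H : Set G) (H : Set G) := DoubleCoset.mk H H y⁻¹ with hd
      have hmk : DoubleCoset.mk H H y⁻¹ = DoubleCoset.mk H H (Quotient.out d) := by
        rw [DoubleCoset.out_eq']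
      rw [DoubleCoset.eq] at hmk
      obtain ⟨h₀, hh₀, k, hk, hgk⟩ := hmk
      refine ⟨⟨d, QuotientGroup.mk (⟨k, hk⟩ : H)⟩, ?_⟩
      have hb : ((⟨k, hk⟩ : H)⁻¹ * Quotient.out (QuotientGroup.mk (⟨k, hk⟩ : H)
            : H ⧸ (conjInter H (Quotient.out d)).subgroupOf H) : H)
          ∈ (conjInter H (Quotient.out d)).subgroupOf H := by
        rw [← QuotientGroup.eq, QuotientGroup.out_eq']
      rw [Subgroup.mem_subgroupOf] at hb
      rw [mem_conjInter] at hb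
      obtain ⟨hκH, hκconj⟩ := hb
      rw [← QuotientGroup.out_eq' q]
      rw [QuotientGroup.eq, Subgroup.mem_subgroupOf]
      push_cast
      set b : G := ((Quotient.out (QuotientGroup.mk (⟨k, hk⟩ : H)
          : H ⧸ (conjInter H (Quotient.out d)).subgroupOf H) : H) : G) with hbdef
      set g : G := Quotient.out d with hgdef
      -- we know : k⁻¹ * b ∈ H, g * (k⁻¹ * b) * g⁻¹ ∈ H, g = h₀ * y⁻¹ * k
      have key : (b * g⁻¹)⁻¹ * y = (g * (k⁻¹ * b) * g⁻¹)⁻¹ * h₀ := by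
        rw [hgk]; group
      rw [key]
      exact mul_mem (inv_mem hκconj) hh₀
    · -- terms agree
      rintro ⟨d, c⟩
      dsimp only
      have hY : ((⟨((Quotient.out c : H) : G) * (Quotient.out d)⁻¹, Subgroup.mem_top _⟩
            : (⊤ : Subgroup G))⁻¹
            * Quotient.out (QuotientGroup.mk
              (⟨((Quotient.out c : H) : G) * (Quotient.out d)⁻¹, Subgroup.mem_top _⟩
                : (⊤ : Subgroup G)) : (⊤ : Subgroup G) ⧸ H.subgroupOf ⊤))
          ∈ H.subgroupOf ⊤ := by
        rw [← QuotientGroup.eq, QuotientGroup.out_eq']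
      rw [Subgroup.mem_subgroupOf] at hY
      push_cast at hY
      set Y : G := ((Quotient.out (QuotientGroup.mk
          (⟨((Quotient.out c : H) : G) * (Quotient.out d)⁻¹, Subgroup.mem_top _⟩
            : (⊤ : Subgroup G)) : (⊤ : Subgroup G) ⧸ H.subgroupOf ⊤) : (⊤ : Subgroup G)) : G)
        with hYdef
      -- hY : (out c * (out d)⁻¹)⁻¹ * Y ∈ H
      have hw : (Quotient.out d * ((Quotient.out c : H) : G)⁻¹) * Y ∈ H := by
        have : (Quotient.out d * ((Quotient.out c : H) : G)⁻¹) * Y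
            = (((Quotient.out c : H) : G) * (Quotient.out d)⁻¹)⁻¹ * Y := by group
        rw [this]; exact hY
      have hrw : Y⁻¹ = ((Quotient.out d * ((Quotient.out c : H) : G)⁻¹) * Y)⁻¹
          * (Quotient.out d * ((Quotient.out c : H) : G)⁻¹) := by group
      rw [hrw, hF _ (inv_mem hw)]
  rw [← key, ← Finset.univ_sigma_univ, Finset.sum_sigma]

end Aux

/-- If `[G:H]` is invertible in `R`, the fork
`⊕_{g ∈ G} M_{H ∩ g⁻¹Hg} ⇉ M_H → M_G`, with the two parallel maps given on the
summand of index `g` by the natural projection and by `[m] ↦ [g • m]`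
respectively, and the final map the natural projection, is a split coequalizer
diagram. -/
theorem coinvariants_split_coequalizer (H : Subgroup G) (hu : IsUnit ((H.index : ℕ) : R)) :
    ∃ (d0 d1 : (⨁ g : G, M ⧸ coinvAug R M (conjInter H g)) →ₗ[R] M ⧸ coinvAug R M H)
      (e : (M ⧸ coinvAug R M H) →ₗ[R] M ⧸ coinvAug R M (⊤ : Subgroup G))
      (s : (M ⧸ coinvAug R M (⊤ : Subgroup G)) →ₗ[R] M ⧸ coinvAug R M H)
      (t : (M ⧸ coinvAug R M H) →ₗ[R] ⨁ g : G, M ⧸ coinvAug R M (conjInter H g)),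
      (∀ (g : G) (m : M),
        d0 (DirectSum.lof R G (fun g => M ⧸ coinvAug R M (conjInter H g)) g
          (Submodule.Quotient.mk m)) = Submodule.Quotient.mk m) ∧
      (∀ (g : G) (m : M),
        d1 (DirectSum.lof R G (fun g => M ⧸ coinvAug R M (conjInter H g)) g
          (Submodule.Quotient.mk m)) = Submodule.Quotient.mk (g • m)) ∧
      (∀ m : M, e (Submodule.Quotient.mk m) = Submodule.Quotient.mk m) ∧
      e.comp d0 = e.comp d1 ∧
      e.comp s = LinearMap.id ∧
      d0.comp t = LinearMap.id ∧
      d1.comp t = s.comp e := by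
  letI iDQfin : Finite (DoubleCoset.Quotient (H : Set G) (H : Set G)) :=
    inferInstanceAs (Finite (Quotient (DoubleCoset.setoid (H : Set G) (H : Set G))))
  letI iDQ : Fintype (DoubleCoset.Quotient (H : Set G) (H : Set G)) := Fintype.ofFinite _
  letI iT : Fintype ((⊤ : Subgroup G) ⧸ H.subgroupOf ⊤) := Fintype.ofFinite _
  letI iH : ∀ d : DoubleCoset.Quotient (H : Set G) (H : Set G),
      Fintype (H ⧸ (conjInter H (Quotient.out d)).subgroupOf H) := fun _ => Fintype.ofFinite _
  set r : R := ((hu.unit⁻¹ : Rˣ) : R) with hrdef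
  have hr : r * ((H.index : ℕ) : R) = 1 := by
    simpa [hrdef] using hu.val_inv_mul
  set d0 : (⨁ g : G, M ⧸ coinvAug R M (conjInter H g)) →ₗ[R] M ⧸ coinvAug R M H :=
    DirectSum.toModule R G _ (fun _ => piQ conjInter_le) with hd0
  set d1 : (⨁ g : G, M ⧸ coinvAug R M (conjInter H g)) →ₗ[R] M ⧸ coinvAug R M H :=
    DirectSum.toModule R G _ (fun g => rhoQ H g) with hd1
  set e : (M ⧸ coinvAug R M H) →ₗ[R] M ⧸ coinvAug R M (⊤ : Subgroup G) :=
    piQ le_top with he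
  set s : (M ⧸ coinvAug R M (⊤ : Subgroup G)) →ₗ[R] M ⧸ coinvAug R M H :=
    r • transferQ H ⊤ with hs
  set cast1 : (M ⧸ coinvAug R M H) →ₗ[R] M ⧸ coinvAug R M (conjInter H (1 : G)) :=
    (Submodule.quotEquivOfEq _ _ (by rw [conjInter_one]) :
      (M ⧸ coinvAug R M H) ≃ₗ[R] M ⧸ coinvAug R M (conjInter H (1 : G))).toLinearMap
    with hcast1
  set A : (M ⧸ coinvAug R M H) →ₗ[R] ⨁ g : G, M ⧸ coinvAug R M (conjInter H g) :=
    (DirectSum.lof R G (fun g => M ⧸ coinvAug R M (conjInter H g)) (1 : G)) ∘ₗ cast1 with hA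
  set B : (M ⧸ coinvAug R M H) →ₗ[R] ⨁ g : G, M ⧸ coinvAug R M (conjInter H g) :=
    ∑ d : DoubleCoset.Quotient (H : Set G) (H : Set G),
      (DirectSum.lof R G (fun g => M ⧸ coinvAug R M (conjInter H g)) (Quotient.out d)) ∘ₗ
        transferQ (conjInter H (Quotient.out d)) H with hB
  set C : (M ⧸ coinvAug R M H) →ₗ[R] ⨁ g : G, M ⧸ coinvAug R M (conjInter H g) :=
    ∑ d : DoubleCoset.Quotient (H : Set G) (H : Set G),
      A ∘ₗ piQ conjInter_le ∘ₗ transferQ (conjInter H (Quotient.out d)) H with hC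
  set t : (M ⧸ coinvAug R M H) →ₗ[R] ⨁ g : G, M ⧸ coinvAug R M (conjInter H g) :=
    A + r • (B - C) with ht
  have cast1_mk : ∀ m : M, cast1 (Submodule.Quotient.mk m) = Submodule.Quotient.mk m := by
    intro m
    simp [hcast1, Submodule.quotEquivOfEq_mk]
  have hd0A : ∀ x, d0 (A x) = x := by
    intro x
    have : d0 ∘ₗ A = LinearMap.id := by
      apply Submodule.linearMap_qext
      ext m
      simp [hA, hd0, cast1_mk, DirectSum.toModule_lof]
    calc d0 (A x) = (d0 ∘ₗ A) x := rfl
      _ = x := by rw [this]; rfl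
  have hd1A : ∀ x, d1 (A x) = x := by
    intro x
    have : d1 ∘ₗ A = LinearMap.id := by
      apply Submodule.linearMap_qext
      ext m
      simp [hA, hd1, cast1_mk, DirectSum.toModule_lof]
    calc d1 (A x) = (d1 ∘ₗ A) x := rfl
      _ = x := by rw [this]; rfl
  have hFconst : ∀ (z : M ⧸ coinvAug R M H),
      ∑ d : DoubleCoset.Quotient (H : Set G) (H : Set G),
        ∑ _c : H ⧸ (conjInter H (Quotient.out d)).subgroupOf H, z
        = H.index • z := by
    intro z
    have := doset_sum_eq H (fun _ => z) (fun _ _ _ => rfl)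
    rw [this, Finset.sum_const, Finset.card_univ, card_top_quot]
  refine ⟨d0, d1, e, s, t, ?_, ?_, ?_, ?_, ?_, ?_, ?_⟩
  · intro g m
    simp [hd0, DirectSum.toModule_lof]
  · intro g m
    simp [hd1, DirectSum.toModule_lof]
  · intro m
    simp [he]
  · apply DirectSum.linearMap_ext
    intro g
    apply Submodule.linearMap_qext
    ext m
    simp [hd0, hd1, he, DirectSum.toModule_lof]
    exact (coinvAug_mk_smul (Subgroup.mem_top g) m).symm
  · apply Submodule.linearMap_qext
    ext m
    simp only [LinearMap.comp_apply, Submodule.mkQ_apply, hs, LinearMap.smul_apply,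
      LinearMap.id_apply]
    rw [transferQ_mk, transferAux_apply]
    have : ∀ q : (⊤ : Subgroup G) ⧸ H.subgroupOf ⊤,
        e (Submodule.Quotient.mk ((((Quotient.out q : (⊤ : Subgroup G)) : G))⁻¹ • m))
          = (Submodule.Quotient.mk m : M ⧸ coinvAug R M (⊤ : Subgroup G)) := by
      intro q
      rw [he, piQ_mk, coinvAug_mk_smul (Subgroup.mem_top _)]
    rw [map_smul, map_sum, Finset.sum_congr rfl (fun q _ => this q), Finset.sum_const,
      Finset.card_univ, card_top_quot, ← Nat.cast_smul_eq_nsmul R, smul_smul, hr, one_smul]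
  · -- d0.comp t = id
    apply Submodule.linearMap_qext
    ext m
    simp only [LinearMap.comp_apply, Submodule.mkQ_apply, LinearMap.id_apply, ht,
      LinearMap.add_apply, LinearMap.smul_apply, LinearMap.sub_apply]
    rw [map_add, map_smul, map_sub]
    have hBC : d0 (B (Submodule.Quotient.mk m)) = d0 (C (Submodule.Quotient.mk m)) := by
      rw [hB, hC, LinearMap.sum_apply, LinearMap.sum_apply, map_sum, map_sum]
      refine Finset.sum_congr rfl fun d _ => ?_
      simp only [LinearMap.comp_apply]
      rw [hd0, DirectSum.toModule_lof, hd0A]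
    rw [hBC, sub_self, smul_zero, add_zero, hd0A]
  · -- d1.comp t = s.comp e
    apply Submodule.linearMap_qext
    ext m
    simp only [LinearMap.comp_apply, Submodule.mkQ_apply, ht, LinearMap.add_apply,
      LinearMap.smul_apply, LinearMap.sub_apply]
    rw [map_add, map_smul, map_sub, hd1A]
    have hBval : d1 (B (Submodule.Quotient.mk m))
        = transferAux (R := R) (M := M) H ⊤ m := by
      rw [hB, LinearMap.sum_apply, map_sum]
      have step : ∀ d : DoubleCoset.Quotient (H : Set G) (H : Set G),
          d1 (((DirectSum.lof R G (fun g => M ⧸ coinvAug R M (conjInter H g))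
              (Quotient.out d)) ∘ₗ transferQ (conjInter H (Quotient.out d)) H)
              (Submodule.Quotient.mk m))
            = ∑ c : H ⧸ (conjInter H (Quotient.out d)).subgroupOf H,
                Submodule.Quotient.mk
                  ((Quotient.out d * ((Quotient.out c : H) : G)⁻¹) • m) := by
        intro d
        simp only [LinearMap.comp_apply]
        rw [hd1, DirectSum.toModule_lof, transferQ_mk, transferAux_apply, map_sum]
        refine Finset.sum_congr rfl fun c _ => ?_
        simp [mul_smul]
      rw [Finset.sum_congr rfl fun d _ => step d]
      rw [doset_sum_eq H
        (fun x => Submodule.Quotient.mk (x • m)) ?_ ]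
      · rw [transferAux_apply]
      · intro h hh x
        simp only [mul_smul]
        exact coinvAug_mk_smul hh _
    have hCval : d1 (C (Submodule.Quotient.mk m))
        = H.index • (Submodule.Quotient.mk m : M ⧸ coinvAug R M H) := by
      rw [hC, LinearMap.sum_apply, map_sum]
      have step : ∀ d : DoubleCoset.Quotient (H : Set G) (H : Set G),
          d1 ((A ∘ₗ piQ conjInter_le ∘ₗ transferQ (conjInter H (Quotient.out d)) H)
              (Submodule.Quotient.mk m))
            = ∑ _c : H ⧸ (conjInter H (Quotient.out d)).subgroupOf H,
                (Submodule.Quotient.mk m : M ⧸ coinvAug R M H) := by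
        intro d
        simp only [LinearMap.comp_apply]
        rw [hd1A, transferQ_mk, transferAux_apply, map_sum]
        refine Finset.sum_congr rfl fun c _ => ?_
        rw [piQ_mk]
        exact coinvAug_mk_smul (H.inv_mem (Quotient.out c : H).2) m
      rw [Finset.sum_congr rfl fun d _ => step d, hFconst]
    rw [hBval, hCval]
    have hse : s (e (Submodule.Quotient.mk m))
        = r • transferAux (R := R) (M := M) H ⊤ m := by
      rw [he, piQ_mk, hs, LinearMap.smul_apply, transferQ_mk]
    rw [hse, smul_sub, ← Nat.cast_smul_eq_nsmul R, smul_smul, hr, one_smul]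
    abel
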